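/- arXiv:1207.4967 — 2 statements merged into one kernel-verified Lean document; each statement's English description precedes it below -/
import Mathlib

section
/- Consider the closed-loop greedy quantization dynamics: x[0] = 0, x[n+1] = A x[n] + B(r[n] - u[n]) with u[n] = K((CB)⁻¹ C A x[n] + r[n]), where K rounds to the nearest point of δℤ. Then the output q[n] = C x[n] satisfies |q[n]| ≤ |CB| δ/2 for all n ≥ 0. -/
open Matrix

/-- Closed-loop greedy quantization dynamics: with `x 0 = 0`,
`x (n+1) = A x n + B (r n - u n)`, `u n = K ((CB)⁻¹ C A x n + r n)` where `K`
rounds to the nearest point of `δℤ` (so `|θ - K θ| ≤ δ/2`), the output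
`q n = C x n` satisfies `|q n| ≤ |CB| δ / 2` for all `n`. -/
theorem greedy_adc_output_bound
    (m : ℕ) (A : Matrix (Fin m) (Fin m) ℝ)
    (B : Matrix (Fin m) (Fin 1) ℝ) (C : Matrix (Fin 1) (Fin m) ℝ)
    (cb : ℝ) (hcb : cb = (C * B) 0 0) (hcb0 : cb ≠ 0)
    (δ : ℝ) (hδ : 0 < δ)
    (K : ℝ → ℝ) (hK : ∀ θ : ℝ, |θ - K θ| ≤ δ / 2)
    (r : ℕ → ℝ)
    (x : ℕ → Matrix (Fin m) (Fin 1) ℝ) (u q : ℕ → ℝ)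
    (hx0 : x 0 = 0)
    (hu : ∀ n, u n = K (cb⁻¹ * (C * A * x n) 0 0 + r n))
    (hx : ∀ n, x (n + 1) = A * x n + (r n - u n) • B)
    (hq : ∀ n, q n = (C * x n) 0 0) :
    ∀ n, |q n| ≤ |cb| * δ / 2 := by
  intro n
  cases n with
  | zero =>
      rw [hq, hx0, Matrix.mul_zero]
      simp only [Matrix.zero_apply, abs_zero]
      positivity
  | succ n =>
      set θ := cb⁻¹ * (C * A * x n) 0 0 + r n with hθ
      have key : q (n + 1) = cb * (θ - K θ) := by
        rw [hq, hx n, Matrix.mul_add, Matrix.mul_smul, hu n]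
        have hent : (C * (A * x n) + (r n - K θ) • (C * B)) 0 0
            = (C * A * x n) 0 0 + (r n - K θ) * (C * B) 0 0 := by
          simp [Matrix.add_apply, Matrix.smul_apply, Matrix.mul_assoc]
        rw [hent, ← hcb]
        field_simp [hθ]
        have hcθ : cb * θ = (C * A * x n) 0 0 + r n * cb := by
          rw [hθ, mul_add, ← mul_assoc, mul_inv_cancel₀ hcb0, one_mul]; ring
        linarith
      rw [key, abs_mul]
      calc |cb| * |θ - K θ| ≤ |cb| * (δ / 2) := by
            exact mul_le_mul_of_nonneg_left (hK θ) (abs_nonneg cb)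
        _ = |cb| * δ / 2 := by ring
end

section
/- For any causal ADC policy producing outputs u[n] in the lattice δℤ driving the state-space system x[0]=0, x[n+1]=Ax[n]+B(r[n]-u[n]), q[n]=Cx[n], there exists an input sequence r with values in [-1,1] such that |q[n]| ≥ |CB| δ/2 for all n ≥ 1. The adversarial input is r[n] = (2ρ(x[n])+1)δ/2 - (CB)⁻¹ C A x[n], where ρ(x) is an integer k minimizing |(2k+1)δ/2 - (CB)⁻¹ C A x|. -/
open Matrix

noncomputable def advPhi (m : ℕ) (A : Matrix (Fin m) (Fin m) ℝ)
    (C : Matrix (Fin 1) (Fin m) ℝ) (cb δ : ℝ)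
    (x : Matrix (Fin m) (Fin 1) ℝ) : ℝ :=
  (round ((cb⁻¹ * (C * A * x) 0 0 - δ / 2) / δ) : ℤ) * δ + δ / 2
    - cb⁻¹ * (C * A * x) 0 0

noncomputable def advX (m : ℕ) (A : Matrix (Fin m) (Fin m) ℝ)
    (B : Matrix (Fin m) (Fin 1) ℝ) (Υ : (ℕ → ℝ) → ℕ → ℝ) (r : ℕ → ℝ) :
    ℕ → Matrix (Fin m) (Fin 1) ℝ
  | 0 => 0
  | n + 1 => A * advX m A B Υ r n + (r n - Υ r n) • B

noncomputable def advG (m : ℕ) (A : Matrix (Fin m) (Fin m) ℝ)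
    (B : Matrix (Fin m) (Fin 1) ℝ) (C : Matrix (Fin 1) (Fin m) ℝ)
    (cb δ : ℝ) (Υ : (ℕ → ℝ) → ℕ → ℝ) : ℕ → (ℕ → ℝ)
  | 0 => fun _ => 0
  | n + 1 => fun k =>
      if k = n then advPhi m A C cb δ (advX m A B Υ (advG m A B C cb δ Υ n) n)
      else advG m A B C cb δ Υ n k

/-- Lower bound construction: for any causal ADC policy producing outputs in
the lattice `δℤ`, there is an input sequence with values in `[-1,1]` for which
the shaped error satisfies `|q n| ≥ |CB| δ / 2` for all `n ≥ 1`. -/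
theorem adversarial_input_lower_bound
    (m : ℕ) (A : Matrix (Fin m) (Fin m) ℝ)
    (B : Matrix (Fin m) (Fin 1) ℝ) (C : Matrix (Fin 1) (Fin m) ℝ)
    (cb : ℝ) (hcb : cb = (C * B) 0 0) (hcb0 : cb ≠ 0)
    (δ : ℝ) (hδ : 0 < δ) (hδ2 : δ ≤ 2)
    -- a causal ADC policy producing outputs in δℤ
    (Υ : (ℕ → ℝ) → ℕ → ℝ)
    (hcausal : ∀ r r' : ℕ → ℝ, ∀ n : ℕ, (∀ k ≤ n, r k = r' k) → Υ r n = Υ r' n)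
    (hlat : ∀ r : ℕ → ℝ, ∀ n : ℕ, ∃ k : ℤ, Υ r n = k * δ) :
    ∃ r : ℕ → ℝ, ∃ x : ℕ → Matrix (Fin m) (Fin 1) ℝ,
      (∀ n, r n ∈ Set.Icc (-1 : ℝ) 1) ∧
      x 0 = 0 ∧
      (∀ n, x (n + 1) = A * x n + (r n - Υ r n) • B) ∧
      (∀ n ≥ 1, |(C * x n) 0 0| ≥ |cb| * δ / 2) := by
  set g := advG m A B C cb δ Υ with hg
  set r : ℕ → ℝ := fun n => g (n + 1) n with hr
  set x := advX m A B Υ r with hx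
  -- extensionality of advX
  have hXext : ∀ n : ℕ, ∀ r1 r2 : ℕ → ℝ, (∀ k < n, r1 k = r2 k) →
      advX m A B Υ r1 n = advX m A B Υ r2 n := by
    intro n
    induction n with
    | zero => intro r1 r2 _; rfl
    | succ n ih =>
      intro r1 r2 h
      have h1 : advX m A B Υ r1 n = advX m A B Υ r2 n :=
        ih r1 r2 fun k hk => h k (Nat.lt_succ_of_lt hk)
      have h2 : Υ r1 n = Υ r2 n := hcausal r1 r2 n fun k hk => h k (Nat.lt_succ_of_le hk)
      simp only [advX, h1, h2, h n (Nat.lt_succ_self n)]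
  -- g n agrees with r below n
  have hgr : ∀ n : ℕ, ∀ k < n, g n k = r k := by
    intro n
    induction n with
    | zero => intro k hk; omega
    | succ n ih =>
      intro k hk
      rcases Nat.lt_succ_iff_lt_or_eq.mp hk with h | h
      · have : g (n + 1) k = g n k := by
          simp only [hg, advG]; rw [if_neg (by omega)]
        rw [this, ih k h]
      · subst h; rfl
  -- r n = advPhi applied to the true state
  have hrx : ∀ n : ℕ, r n = advPhi m A C cb δ (x n) := by
    intro n
    have h1 : r n = advPhi m A C cb δ (advX m A B Υ (g n) n) := by
      simp only [hr, hg, advG, if_pos rfl]; simp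
    rw [h1, hXext n (g n) r (hgr n)]
  -- bound on advPhi
  have hphi : ∀ y : Matrix (Fin m) (Fin 1) ℝ, |advPhi m A C cb δ y| ≤ δ / 2 := by
    intro y
    set a := cb⁻¹ * (C * A * y) 0 0 with ha
    set t := (a - δ / 2) / δ with htd
    have ht : t * δ = a - δ / 2 := by rw [htd]; field_simp
    have h1 : advPhi m A C cb δ y = ((round t : ℝ) - t) * δ := by
      simp only [advPhi, ← ha, ← htd]
      nlinarith [ht]
    rw [h1, abs_mul, abs_of_pos hδ]
    have h2 : |(round t : ℝ) - t| ≤ 1 / 2 := by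
      rw [abs_sub_comm]; exact abs_sub_round t
    nlinarith
  refine ⟨r, x, ?_, rfl, fun n => rfl, ?_⟩
  · intro n
    have := hphi (x n)
    rw [← hrx n] at this
    rw [Set.mem_Icc]
    constructor <;> [nlinarith [abs_nonneg (r n), neg_abs_le (r n)];
      nlinarith [le_abs_self (r n)]]
  · intro n hn
    obtain ⟨p, rfl⟩ : ∃ p, n = p + 1 := ⟨n - 1, by omega⟩
    obtain ⟨j, hj⟩ := hlat r p
    set a := cb⁻¹ * (C * A * (x p)) 0 0 with ha
    set k := round ((a - δ / 2) / δ) with hk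
    have hCAx : (C * A * x p) 0 0 = cb * a := by
      rw [ha]; field_simp
    have hrp : r p = (k : ℝ) * δ + δ / 2 - a := by
      rw [hrx p]; simp only [advPhi, ← ha, ← hk]
    have hq : (C * x (p + 1)) 0 0 = cb * ((((k - j : ℤ)) : ℝ) * δ + δ / 2) := by
      have hxp : x (p + 1) = A * x p + (r p - Υ r p) • B := rfl
      rw [hxp, Matrix.mul_add, Matrix.mul_smul]
      rw [Matrix.add_apply, Matrix.smul_apply, smul_eq_mul, ← Matrix.mul_assoc,
        hCAx, ← hcb, hrp, hj]
      push_cast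
      ring
    rw [hq, abs_mul]
    have hl : δ / 2 ≤ |(((k - j : ℤ)) : ℝ) * δ + δ / 2| := by
      set l : ℤ := k - j
      rcases le_or_gt 0 l with h | h
      · have : (0 : ℝ) ≤ (l : ℝ) := by exact_mod_cast h
        rw [abs_of_nonneg (by nlinarith)]; nlinarith
      · have h1 : l ≤ -1 := by omega
        have : (l : ℝ) ≤ -1 := by exact_mod_cast h1
        rw [abs_of_nonpos (by nlinarith)]; nlinarith
    have hcbpos : 0 < |cb| := abs_pos.mpr hcb0
    calc |cb| * δ / 2 = |cb| * (δ / 2) := by ring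
      _ ≤ |cb| * |(((k - j : ℤ)) : ℝ) * δ + δ / 2| := by
          exact mul_le_mul_of_nonneg_left hl (le_of_lt hcbpos)
end
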